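/- Let W_n (n ≥ 3) be the wheel graph, which has n + 1 vertices and 2n edges. Then BRL1(W_n) = n[(n+1)^2(n^2 − 3n + 3) + 48]/(n−2)^2 and BRL2(W_n) = n[(n+1)^2(n^2 − 5n + 7) + 16]/(n−2)^2. -/

import Mathlib

open Finset SimpleGraph

variable {V : Type*}

/-- The degree of a vertex, as a real number. -/
noncomputable def deg [Fintype V] (G : SimpleGraph V) (v : V) : ℝ :=
  haveI := Classical.decEq V
  haveI : DecidableRel G.Adj := Classical.decRel _
  (G.degree v : ℝ)

/-- Sum of a symmetric function of the two endpoints, over the edges of `G`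
(each edge counted once). -/
noncomputable def edgeSum [Fintype V] (G : SimpleGraph V)
    (f : V → V → ℝ) (hf : ∀ u v, f u v = f v u) : ℝ :=
  haveI := Classical.decEq V
  haveI : DecidableRel G.Adj := Classical.decRel _
  ∑ e ∈ G.edgeFinset, Sym2.lift ⟨f, hf⟩ e

/-- The wheel graph `Wₙ`: the join of a single hub vertex (`none`) with the
cycle `Cₙ` (on the vertices `some i`). -/
def wheelGraph (n : ℕ) : SimpleGraph (Option (Fin n)) :=
  SimpleGraph.fromRel (fun u v =>
    u = none ∨ ∃ i j, u = some i ∧ v = some j ∧ (SimpleGraph.cycleGraph n).Adj i j)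

/-- The Banhatti degree of the endpoint `u` of an edge `uv`:
`B(u) = (d(u) + d(v) − 2)/(n − d(u))` where `n` is the number of vertices. -/
noncomputable def bdeg [Fintype V] (G : SimpleGraph V) (u v : V) : ℝ :=
  (deg G u + deg G v - 2) / ((Fintype.card V : ℝ) - deg G u)

/-- The first Banhatti Rehan–Lanel index:
`BRL₁(G) = Σ_{uv∈E(G)} (B(u)² + B(v)² + B(u)B(v))`. -/
noncomputable def BRL1 [Fintype V] (G : SimpleGraph V) : ℝ :=
  edgeSum G (fun u v => bdeg G u v ^ 2 + bdeg G v u ^ 2 + bdeg G u v * bdeg G v u)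
    (fun u v => by (try dsimp only); ring)

/-- The second Banhatti Rehan–Lanel index:
`BRL₂(G) = Σ_{uv∈E(G)} (B(u)² + B(v)² − B(u)B(v))`. -/
noncomputable def BRL2 [Fintype V] (G : SimpleGraph V) : ℝ :=
  edgeSum G (fun u v => bdeg G u v ^ 2 + bdeg G v u ^ 2 - bdeg G u v * bdeg G v u)
    (fun u v => by (try dsimp only); ring)

section WheelAux

lemma wheel_adj_none_some (n : ℕ) (i : Fin n) : (wheelGraph n).Adj none (some i) := by
  simp [wheelGraph]

lemma wheel_adj_some_some (n : ℕ) (i j : Fin n) :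
    (wheelGraph n).Adj (some i) (some j) ↔ (cycleGraph n).Adj i j := by
  simp only [wheelGraph, fromRel_adj, ne_eq, Option.some.injEq, reduceCtorEq, false_or]
  constructor
  · rintro ⟨h, ⟨a, b, ha, hb, hab⟩ | ⟨a, b, ha, hb, hab⟩⟩
    · cases ha; cases hb; exact hab
    · cases ha; cases hb; exact hab.symm
  · intro h
    exact ⟨by simpa using h.ne, Or.inl ⟨i, j, rfl, rfl, h⟩⟩

lemma wheel_not_adj_none_none (n : ℕ) : ¬ (wheelGraph n).Adj none none :=
  fun h => h.ne rfl

end WheelAux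

section WheelDeg

lemma wheel_degree_none (n : ℕ) [Fintype ((wheelGraph n).neighborSet none)] :
    (wheelGraph n).degree none = n := by
  classical
  have h : (wheelGraph n).neighborFinset none = Finset.univ.image some := by
    ext w
    cases w with
    | none => simp [wheel_not_adj_none_none]
    | some j => simp [wheel_adj_none_some]
  rw [SimpleGraph.degree, h, Finset.card_image_of_injective _ (Option.some_injective _)]
  simp

lemma wheel_degree_some (m : ℕ) (i : Fin (m + 3))
    [Fintype ((wheelGraph (m + 3)).neighborSet (some i))] :
    (wheelGraph (m + 3)).degree (some i) = 3 := by
  classical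
  have h : (wheelGraph (m + 3)).neighborFinset (some i)
      = insert none (((cycleGraph (m + 3)).neighborFinset i).image some) := by
    ext w
    cases w with
    | none => simp [((wheel_adj_none_some _ i).symm : (wheelGraph (m+3)).Adj (some i) none)]
    | some j =>
      simp only [SimpleGraph.mem_neighborFinset, wheel_adj_some_some, Finset.mem_insert,
        reduceCtorEq, Finset.mem_image, Option.some.injEq, false_or]
      constructor
      · intro hadj; exact ⟨j, by simpa using hadj, rfl⟩
      · rintro ⟨a, ha, rfl⟩; simpa using ha
  rw [SimpleGraph.degree, h, Finset.card_insert_of_notMem (by simp),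
    Finset.card_image_of_injective _ (Option.some_injective _)]
  rw [← SimpleGraph.degree, cycleGraph_degree_three_le]

lemma deg_wheel_none (n : ℕ) : deg (wheelGraph n) none = n := by
  unfold deg
  rw [wheel_degree_none]

lemma deg_wheel_some (m : ℕ) (i : Fin (m + 3)) :
    deg (wheelGraph (m + 3)) (some i) = 3 := by
  unfold deg
  rw [wheel_degree_some]
  norm_num

end WheelDeg

section WheelEdges

lemma wheel_spoke_inj (m : ℕ) :
    Function.Injective (fun i : Fin (m+3) => s(none, some i)) := by
  intro a b h
  simp only [Sym2.eq_iff, reduceCtorEq, Option.some.injEq, false_and, and_false, or_false] at h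
  exact h.2

lemma fin_val_one_wheel (m : ℕ) : ((1 : Fin (m+3)) : ℕ) = 1 := by
  have h : ((1 : Fin (m+3)) : ℕ) = 1 % (m+3) := rfl
  rw [h, Nat.mod_eq_of_lt (by omega)]

lemma wheel_rim_inj (m : ℕ) :
    Function.Injective (fun i : Fin (m+3) => s(some i, some (i+1))) := by
  intro a b h
  simp only [Sym2.eq_iff, Option.some.injEq] at h
  rcases h with ⟨h1, _⟩ | ⟨h1, h2⟩
  · exact h1
  · exfalso
    have hb2 : b + 1 + 1 = b := by rw [← h1, h2]
    have hv := congrArg Fin.val hb2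
    rw [Fin.val_add, Fin.val_add, fin_val_one_wheel] at hv
    have hlt := b.isLt
    rcases Nat.lt_or_ge (b.val + 1) (m+3) with hc | hc
    · rw [Nat.mod_eq_of_lt hc] at hv
      rcases Nat.lt_or_ge (b.val + 1 + 1) (m+3) with hd | hd
      · rw [Nat.mod_eq_of_lt hd] at hv; omega
      · have hm : (b.val + 1 + 1) % (m+3) = b.val + 1 + 1 - (m+3) := by
          rw [Nat.mod_eq_sub_mod hd, Nat.mod_eq_of_lt (by omega)]
        rw [hm] at hv; omega
    · have hm : (b.val + 1) % (m+3) = b.val + 1 - (m+3) := by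
        rw [Nat.mod_eq_sub_mod hc, Nat.mod_eq_of_lt (by omega)]
      rw [hm, Nat.mod_eq_of_lt (by omega)] at hv
      omega

lemma wheel_edgeFinset (m : ℕ) {instE : Fintype ((wheelGraph (m+3)).edgeSet)} :
    (wheelGraph (m+3)).edgeFinset
      = (Finset.univ.image fun i : Fin (m+3) => s(none, some i))
        ∪ (Finset.univ.image fun i : Fin (m+3) => s(some i, some (i+1))) := by
  classical
  ext e
  induction e with
  | h u v =>
    simp only [SimpleGraph.mem_edgeFinset, SimpleGraph.mem_edgeSet, Finset.mem_union,
      Finset.mem_image, Finset.mem_univ, true_and]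
    constructor
    · intro hadj
      match u, v with
      | none, none => exact absurd hadj (wheel_not_adj_none_none _)
      | none, some j => exact Or.inl ⟨j, rfl⟩
      | some j, none => exact Or.inl ⟨j, Sym2.eq_swap⟩
      | some i, some j =>
        rw [wheel_adj_some_some, cycleGraph_adj'] at hadj
        rcases hadj with h | h
        · have hij : i = j + 1 := by
            have h1 : i - j = 1 := Fin.ext (by rw [fin_val_one_wheel]; exact h)
            have := sub_eq_iff_eq_add.mp h1
            exact this.trans (add_comm 1 j)
        -- i = j + 1 : e = s(some i, some j) = s(some (j+1), some j) = swap of rim j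
          refine Or.inr ⟨j, ?_⟩
          rw [hij, Sym2.eq_swap]
        · have hji : j = i + 1 := by
            have h1 : j - i = 1 := Fin.ext (by rw [fin_val_one_wheel]; exact h)
            have := sub_eq_iff_eq_add.mp h1
            exact this.trans (add_comm 1 i)
          exact Or.inr ⟨i, by rw [hji]⟩
    · rintro (⟨a, ha⟩ | ⟨a, ha⟩)
      · rcases Sym2.eq_iff.mp ha with ⟨h1, h2⟩ | ⟨h1, h2⟩
        · rw [← h1, ← h2]; exact wheel_adj_none_some _ a
        · rw [← h1, ← h2]; exact (wheel_adj_none_some _ a).symm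
      · have hadj : (wheelGraph (m+3)).Adj (some a) (some (a+1)) := by
          rw [wheel_adj_some_some, cycleGraph_adj']
          right
          rw [add_sub_cancel_left]
          exact fin_val_one_wheel m
        rcases Sym2.eq_iff.mp ha with ⟨h1, h2⟩ | ⟨h1, h2⟩
        · rw [← h1, ← h2]; exact hadj
        · rw [← h1, ← h2]; exact hadj.symm

lemma wheel_edge_disjoint (m : ℕ) :
    Disjoint (Finset.univ.image fun i : Fin (m+3) => s(none, some i))
      (Finset.univ.image fun i : Fin (m+3) => s(some i, some (i+1))) := by
  rw [Finset.disjoint_left]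
  rintro e he1 he2
  simp only [Finset.mem_image, Finset.mem_univ, true_and] at he1 he2
  obtain ⟨a, ha⟩ := he1
  obtain ⟨b, hb⟩ := he2
  rw [← ha] at hb
  rcases Sym2.eq_iff.mp hb with ⟨h1, _⟩ | ⟨_, h2⟩
  · simp at h1
  · simp at h2

lemma edgeSum_wheel (m : ℕ) (f : Option (Fin (m+3)) → Option (Fin (m+3)) → ℝ)
    (hf : ∀ u v, f u v = f v u) (A B : ℝ)
    (hA : ∀ i : Fin (m+3), f none (some i) = A)
    (hB : ∀ i : Fin (m+3), f (some i) (some (i+1)) = B) :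
    edgeSum (wheelGraph (m+3)) f hf = ((m : ℝ) + 3) * A + ((m : ℝ) + 3) * B := by
  unfold edgeSum
  rw [wheel_edgeFinset m, Finset.sum_union (wheel_edge_disjoint m),
    Finset.sum_image (fun a _ b _ h => wheel_spoke_inj m h),
    Finset.sum_image (fun a _ b _ h => wheel_rim_inj m h)]
  simp only [Sym2.lift_mk, hA, hB, Finset.sum_const, Finset.card_univ, Fintype.card_fin,
    nsmul_eq_mul]
  push_cast
  ring

end WheelEdges

/-- For the wheel graph `Wₙ` (`n ≥ 3`), which has `n+1` vertices and `2n` edges: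
`BRL₁(Wₙ) = n[(n+1)²(n² − 3n + 3) + 48]/(n−2)²` and
`BRL₂(Wₙ) = n[(n+1)²(n² − 5n + 7) + 16]/(n−2)²`. -/
theorem BRL_wheelGraph (n : ℕ) (hn : 3 ≤ n) :
    BRL1 (wheelGraph n) =
        n * (((n : ℝ) + 1) ^ 2 * ((n : ℝ) ^ 2 - 3 * n + 3) + 48) / ((n : ℝ) - 2) ^ 2 ∧
      BRL2 (wheelGraph n) =
        n * (((n : ℝ) + 1) ^ 2 * ((n : ℝ) ^ 2 - 5 * n + 7) + 16) / ((n : ℝ) - 2) ^ 2 := by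
  obtain ⟨m, rfl⟩ : ∃ m, n = m + 3 := ⟨n - 3, by omega⟩
  set N : ℝ := (m : ℝ) + 3 with hN
  have hcard : ((Fintype.card (Option (Fin (m + 3)))) : ℝ) = N + 1 := by
    simp [hN]
  have hb1 : ∀ i : Fin (m+3), bdeg (wheelGraph (m+3)) none (some i) = N + 1 := by
    intro i
    rw [bdeg, hcard, deg_wheel_none, deg_wheel_some]
    push_cast
    rw [hN]; ring_nf
  have hb2 : ∀ i : Fin (m+3), bdeg (wheelGraph (m+3)) (some i) none = (N + 1) / (N - 2) := by
    intro i
    rw [bdeg, hcard, deg_wheel_none, deg_wheel_some]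
    push_cast
    rw [hN]; ring_nf
  have hb3 : ∀ i j : Fin (m+3), bdeg (wheelGraph (m+3)) (some i) (some j) = 4 / (N - 2) := by
    intro i j
    rw [bdeg, hcard, deg_wheel_some, deg_wheel_some]
    rw [hN]; ring_nf
  have hNe : N - 2 ≠ 0 := by rw [hN]; intro h; linarith [Nat.cast_nonneg (α := ℝ) m]
  have hcast : ((m + 3 : ℕ) : ℝ) = N := by push_cast [hN]; ring
  constructor
  · have h1 : BRL1 (wheelGraph (m+3)) =
        N * ((N+1)^2 + ((N+1)/(N-2))^2 + (N+1) * ((N+1)/(N-2)))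
          + N * ((4/(N-2))^2 + (4/(N-2))^2 + (4/(N-2)) * (4/(N-2))) := by
      unfold BRL1
      rw [edgeSum_wheel m _ _
          ((N+1)^2 + ((N+1)/(N-2))^2 + (N+1) * ((N+1)/(N-2)))
          ((4/(N-2))^2 + (4/(N-2))^2 + (4/(N-2)) * (4/(N-2)))
          (fun i => by simp only [hb1, hb2])
          (fun i => by simp only [hb3])]
    rw [h1, hcast, hN]
    have hm1 : (m:ℝ) + 3 - 2 ≠ 0 := ne_of_gt (by linarith [Nat.cast_nonneg (α := ℝ) m])
    have hm2 : (m:ℝ) + 1 ≠ 0 := ne_of_gt (by linarith [Nat.cast_nonneg (α := ℝ) m])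
    field_simp
    ring
  · have h2 : BRL2 (wheelGraph (m+3)) =
        N * ((N+1)^2 + ((N+1)/(N-2))^2 - (N+1) * ((N+1)/(N-2)))
          + N * ((4/(N-2))^2 + (4/(N-2))^2 - (4/(N-2)) * (4/(N-2))) := by
      unfold BRL2
      rw [edgeSum_wheel m _ _
          ((N+1)^2 + ((N+1)/(N-2))^2 - (N+1) * ((N+1)/(N-2)))
          ((4/(N-2))^2 + (4/(N-2))^2 - (4/(N-2)) * (4/(N-2)))
          (fun i => by simp only [hb1, hb2])
          (fun i => by simp only [hb3])]
    rw [h2, hcast, hN]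
    have hm1 : (m:ℝ) + 3 - 2 ≠ 0 := ne_of_gt (by linarith [Nat.cast_nonneg (α := ℝ) m])
    have hm2 : (m:ℝ) + 1 ≠ 0 := ne_of_gt (by linarith [Nat.cast_nonneg (α := ℝ) m])
    field_simp
    ring
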